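/- Let (R_j) be a sequence of bounded convex sets in ℝⁿ such that diam(R_j) → ∞ and sup_j |R_j| < ∞. Then for every bounded set B ⊆ ℝⁿ, lim_{j→∞} |B ∩ R_j| = 0, where |·| denotes Lebesgue measure. -/

import Mathlib

open MeasureTheory Set Filter
open scoped ENNReal Pointwise

theorem convex_large_diam_small_intersection (n : ℕ)
    (R : ℕ → Set (EuclideanSpace ℝ (Fin n)))
    (hconv : ∀ j, Convex ℝ (R j)) (hbdd : ∀ j, Bornology.IsBounded (R j))
    (hdiam : Filter.Tendsto (fun j => Metric.diam (R j)) Filter.atTop Filter.atTop)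
    (hvol : ∃ C : ℝ≥0∞, C < ⊤ ∧ ∀ j, volume (R j) ≤ C)
    (B : Set (EuclideanSpace ℝ (Fin n))) (hB : Bornology.IsBounded B) :
    Filter.Tendsto (fun j => volume (B ∩ R j)) Filter.atTop (nhds 0) := by
  obtain ⟨C, hCtop, hRC⟩ := hvol
  rw [ENNReal.tendsto_nhds_zero]
  intro ε hε
  rcases eq_or_ne ε ⊤ with rfl | hεtop
  · filter_upwards with j using le_top
  -- radius r containing B
  obtain ⟨r0, hr0⟩ := hB.subset_closedBall 0
  set r : ℝ := max r0 1 with hrdef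
  have hr1 : (1:ℝ) ≤ r := le_max_right _ _
  have hrpos : (0:ℝ) < r := lt_of_lt_of_le one_pos hr1
  have hBr : B ⊆ Metric.closedBall 0 r :=
    hr0.trans (Metric.closedBall_subset_closedBall (le_max_left _ _))
  -- choose N
  have h2n0 : ((2:ℝ≥0∞)^n) ≠ 0 := pow_ne_zero _ two_ne_zero
  have h2nt : ((2:ℝ≥0∞)^n) ≠ ⊤ := ENNReal.pow_ne_top (by norm_num)
  have hfin : (2:ℝ≥0∞)^n * C / ε ≠ ⊤ :=
    (ENNReal.div_lt_top (ENNReal.mul_ne_top h2nt hCtop.ne) hε.ne').ne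
  obtain ⟨N0, hN0⟩ := ENNReal.exists_nat_gt hfin
  set N : ℕ := N0 + 1 with hNdef
  have hNne : (N:ℝ≥0∞) ≠ 0 := by simp [hNdef]
  -- eventually diam is large
  set D : ℝ := 12*r*(N:ℝ) + 2*r + 1 with hDdef
  filter_upwards [hdiam.eventually_ge_atTop D] with j hj
  set S : Set (EuclideanSpace ℝ (Fin n)) := R j ∩ Metric.closedBall 0 r with hSdef
  have hSconv : Convex ℝ S := (hconv j).inter (convex_closedBall 0 r)
  have hBS : volume (B ∩ R j) ≤ volume S :=
    measure_mono (fun x hx => ⟨hx.2, hBr hx.1⟩)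
  rcases S.eq_empty_or_nonempty with hSe | ⟨s₀, hs₀⟩
  · rw [hSe, measure_empty] at hBS
    exact hBS.trans zero_le
  have hs₀R : s₀ ∈ R j := hs₀.1
  have hs0r : ‖s₀‖ ≤ r := by
    simpa [Metric.mem_closedBall, dist_zero_right] using hs₀.2
  -- find a far point y ∈ R j
  have hxz : ¬ ∀ x ∈ R j, ∀ z ∈ R j, dist x z ≤ D - 1 := by
    intro h
    have hN0' : (0:ℝ) ≤ (N:ℝ) := Nat.cast_nonneg N
    have hD1 : (0:ℝ) ≤ D - 1 := by rw [hDdef]; nlinarith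
    have := Metric.diam_le_of_forall_dist_le hD1 h
    linarith
  push_neg at hxz
  obtain ⟨x, hx, z, hz, hxzd⟩ := hxz
  have hkey : (D-1)/2 ≤ dist s₀ x ∨ (D-1)/2 ≤ dist s₀ z := by
    by_contra h
    push_neg at h
    have htri := dist_triangle x s₀ z
    rw [dist_comm x s₀] at htri
    linarith [h.1, h.2]
  obtain ⟨y, hyR, hyd⟩ : ∃ y ∈ R j, (D-1)/2 ≤ dist s₀ y := by
    rcases hkey with h | h
    exacts [⟨x, hx, h⟩, ⟨z, hz, h⟩]
  have hy6 : 6*r*(N:ℝ) ≤ ‖y‖ := by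
    have h1 : dist s₀ y ≤ ‖s₀‖ + ‖y‖ := by
      rw [dist_eq_norm]; exact norm_sub_le s₀ y
    have hDexp : (D-1)/2 = 6*r*(N:ℝ) + r := by rw [hDdef]; ring
    linarith
  have hN1 : (1:ℝ) ≤ (N:ℝ) := by
    exact_mod_cast Nat.one_le_iff_ne_zero.mpr (by simp [hNdef])
  have hLy : (0:ℝ) < ‖y‖ := lt_of_lt_of_le (by nlinarith) hy6
  -- homothety copies
  set t : ℕ → ℝ := fun k => 1 - 3*r*(k:ℝ)/‖y‖ with htdef
  set c : ℕ → EuclideanSpace ℝ (Fin n) := fun k => (3*r*(k:ℝ)/‖y‖) • y with hcdef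
  set A : ℕ → Set (EuclideanSpace ℝ (Fin n)) := fun k => c k +ᵥ t k • S with hAdef
  have hthalf : ∀ k ∈ Finset.range N, (1:ℝ)/2 ≤ t k := by
    intro k hk
    have hkN : (k:ℝ) ≤ (N:ℝ) := by
      exact_mod_cast le_of_lt (Finset.mem_range.mp hk)
    have hfrac : 3*r*(k:ℝ)/‖y‖ ≤ 1/2 := by
      rw [div_le_iff₀ hLy]
      nlinarith
    simp only [htdef]; linarith
  have ht1 : ∀ k, t k ≤ 1 := by
    intro k
    have hk0 : (0:ℝ) ≤ (k:ℝ) := Nat.cast_nonneg k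
    have : (0:ℝ) ≤ 3*r*(k:ℝ)/‖y‖ := by positivity
    simp only [htdef]; linarith
  have htpos : ∀ k ∈ Finset.range N, (0:ℝ) ≤ t k :=
    fun k hk => le_trans (by norm_num) (hthalf k hk)
  -- A k ⊆ R j
  have hAsub : ∀ k ∈ Finset.range N, A k ⊆ R j := by
    intro k hk w hw
    simp only [hAdef, mem_vadd_set, mem_smul_set] at hw
    obtain ⟨_, ⟨s, hsS, rfl⟩, rfl⟩ := hw
    have hab : 3*r*(k:ℝ)/‖y‖ + t k = 1 := by simp [htdef]
    have hk0 : (0:ℝ) ≤ (k:ℝ) := Nat.cast_nonneg k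
    have ha : (0:ℝ) ≤ 3*r*(k:ℝ)/‖y‖ := by positivity
    exact hconv j hyR hsS.1 ha (htpos k hk) hab
  -- A k ⊆ closedBall (c k) r
  have hAball : ∀ k ∈ Finset.range N, A k ⊆ Metric.closedBall (c k) r := by
    intro k hk w hw
    simp only [hAdef, mem_vadd_set, mem_smul_set] at hw
    obtain ⟨_, ⟨s, hsS, rfl⟩, rfl⟩ := hw
    have hsr : ‖s‖ ≤ r := by
      simpa [Metric.mem_closedBall, dist_zero_right] using hsS.2
    have hd : dist (c k +ᵥ t k • s) (c k) = |t k| * ‖s‖ := by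
      simp [dist_eq_norm, norm_smul]
    rw [Metric.mem_closedBall, hd, abs_of_nonneg (htpos k hk)]
    nlinarith [htpos k hk, ht1 k, norm_nonneg s]
  -- disjointness
  have hdisj : (↑(Finset.range N) : Set ℕ).Pairwise (Function.onFun (AEDisjoint volume) A) := by
    intro k hk l hl hkl
    have hckl : c k - c l = (3*r*((k:ℝ)-(l:ℝ))/‖y‖) • y := by
      simp only [hcdef]
      rw [← sub_smul]
      congr 1
      ring
    have hdist : dist (c k) (c l) = 3*r*|(k:ℝ)-(l:ℝ)| := by
      rw [dist_eq_norm, hckl, norm_smul, Real.norm_eq_abs, abs_div, abs_norm,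
        div_mul_cancel₀ _ hLy.ne', abs_mul,
        abs_of_nonneg (show (0:ℝ) ≤ 3*r by positivity)]
    have hkl1 : (1:ℝ) ≤ |(k:ℝ) - (l:ℝ)| := by
      have hne : k ≠ l := hkl
      have hz : (1:ℤ) ≤ |(k:ℤ) - (l:ℤ)| := by
        rcases abs_cases ((k:ℤ) - (l:ℤ)) with ⟨h1, h2⟩ | ⟨h1, h2⟩ <;> omega
      exact_mod_cast hz
    have hball : Disjoint (Metric.closedBall (c k) r) (Metric.closedBall (c l) r) := by
      apply Metric.closedBall_disjoint_closedBall
      rw [hdist]; nlinarith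
    exact (hball.mono (hAball k hk) (hAball l hl)).aedisjoint
  -- measurability
  have hmeas : ∀ k ∈ Finset.range N, NullMeasurableSet (A k) volume := by
    intro k hk
    have hconvA : Convex ℝ (A k) := by
      simpa [hAdef] using ((hSconv.smul (t k)).vadd (c k))
    exact hconvA.nullMeasurableSet volume
  -- volume lower bound for each copy
  have hvolA : ∀ k ∈ Finset.range N, ((2:ℝ≥0∞)^n)⁻¹ * volume S ≤ volume (A k) := by
    intro k hk
    have h1 : volume (A k) = ENNReal.ofReal |t k ^ n| * volume S := by
      simp only [hAdef]
      rw [measure_vadd, Measure.addHaar_smul, finrank_euclideanSpace_fin]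
    rw [h1, abs_of_nonneg (pow_nonneg (htpos k hk) n)]
    have hle : ((2:ℝ≥0∞)^n)⁻¹ ≤ ENNReal.ofReal (t k ^ n) := by
      have heq : ((2:ℝ≥0∞)^n)⁻¹ = ENNReal.ofReal ((1/2)^n) := by
        rw [ENNReal.ofReal_pow (by norm_num : (0:ℝ) ≤ 1/2), ENNReal.inv_pow]
        congr 1
        rw [show (1:ℝ)/2 = 2⁻¹ by norm_num, ENNReal.ofReal_inv_of_pos two_pos]
        norm_num
      rw [heq]
      exact ENNReal.ofReal_le_ofReal (pow_le_pow_left₀ (by norm_num) (hthalf k hk) n)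
    exact mul_le_mul_left hle _
  -- summation
  have hsumle : (N:ℝ≥0∞) * (((2:ℝ≥0∞)^n)⁻¹ * volume S) ≤ C := by
    have h1 := Finset.card_nsmul_le_sum (Finset.range N) (fun k => volume (A k)) _ hvolA
    rw [Finset.card_range, nsmul_eq_mul] at h1
    have h2 : ∑ k ∈ Finset.range N, volume (A k) = volume (⋃ k ∈ Finset.range N, A k) :=
      (measure_biUnion_finset₀ hdisj hmeas).symm
    have h3 : volume (⋃ k ∈ Finset.range N, A k) ≤ volume (R j) :=
      measure_mono (iUnion₂_subset hAsub)
    exact h1.trans (h2 ▸ h3.trans (hRC j))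
  -- conclude
  have hu : ((2:ℝ≥0∞)^n)⁻¹ * volume S ≤ C / N := by
    rw [ENNReal.le_div_iff_mul_le (Or.inl hNne) (Or.inl (ENNReal.natCast_ne_top N))]
    rw [mul_comm]; exact hsumle
  have hvS : volume S ≤ (2:ℝ≥0∞)^n * C / N := by
    have h4 := mul_le_mul_right hu ((2:ℝ≥0∞)^n)
    rwa [← mul_assoc, ENNReal.mul_inv_cancel h2n0 h2nt, one_mul, ← mul_div_assoc] at h4
  have hfinal : (2:ℝ≥0∞)^n * C / N ≤ ε := by
    rw [ENNReal.div_le_iff_le_mul (Or.inl hNne) (Or.inl (ENNReal.natCast_ne_top N))]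
    rw [ENNReal.div_lt_iff (Or.inl hε.ne') (Or.inl hεtop)] at hN0
    calc (2:ℝ≥0∞)^n * C ≤ (N0:ℝ≥0∞) * ε := hN0.le
      _ ≤ ε * N := by
          rw [mul_comm]
          gcongr
          exact_mod_cast Nat.le_succ N0
  exact hBS.trans (hvS.trans hfinal)
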